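/- Let G ⊆ ℝ^n be convex with nonempty interior G⁰, C ⊆ G convex intersecting G⁰, and C⁰ = C ∩ G⁰. Let ω : G → ℝ be convex and continuously differentiable on G⁰, with Bregman divergence D_ω(x‖y) = ω(x) - ω(y) - ∇ω(y)ᵀ(x - y). Let g : G → ℝ be convex, α > 0, y ∈ C⁰, and suppose x* ∈ argmin_{x∈C} [g(x) + α D_ω(x‖y)] with x* ∈ C⁰. Then for all z ∈ C: g(x*) + α D_ω(x*‖y) ≤ g(z) + α D_ω(z‖y) - α D_ω(z‖x*). -/

import Mathlib

/-- Three-point pushback property of Bregman-proximal minimization. -/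
theorem stmt10 (n : ℕ) (G C : Set (EuclideanSpace ℝ (Fin n)))
    (hGconv : Convex ℝ G) (hGint : (interior G).Nonempty)
    (hCconv : Convex ℝ C) (hCG : C ⊆ G)
    (hCint : (C ∩ interior G).Nonempty)
    (w : EuclideanSpace ℝ (Fin n) → ℝ) (hw : ConvexOn ℝ G w)
    (gradw : EuclideanSpace ℝ (Fin n) → EuclideanSpace ℝ (Fin n))
    (hgrad : ∀ x ∈ interior G, HasGradientAt w (gradw x) x)
    (D : EuclideanSpace ℝ (Fin n) → EuclideanSpace ℝ (Fin n) → ℝ)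
    (hD : ∀ x y, D x y = w x - w y - (inner ℝ (gradw y) (x - y) : ℝ))
    (g : EuclideanSpace ℝ (Fin n) → ℝ) (hg : ConvexOn ℝ G g)
    (α : ℝ) (hα : 0 < α)
    (y : EuclideanSpace ℝ (Fin n)) (hy : y ∈ C ∩ interior G)
    (x : EuclideanSpace ℝ (Fin n)) (hx : x ∈ C ∩ interior G)
    (hxmin : ∀ z ∈ C, g x + α * D x y ≤ g z + α * D z y) :
    ∀ z ∈ C, g x + α * D x y ≤ g z + α * D z y - α * D z x := by
  intro z hz
  set v := z - x with hv
  -- key first-order optimality inequality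
  have key : g x - g z + α * (inner ℝ (gradw y) v : ℝ) ≤ α * (inner ℝ (gradw x) v : ℝ) := by
    have hL : HasDerivAt (fun t : ℝ => x + t • v) v 0 :=
      by simpa using ((hasDerivAt_id (0:ℝ)).smul_const v).const_add x
    have hF := (hgrad x hx.2).hasFDerivAt
    have hwd : HasDerivAt (fun t : ℝ => w (x + t • v)) (inner ℝ (gradw x) v : ℝ) 0 := by
      have hF' : HasFDerivAt w ((InnerProductSpace.toDual ℝ (EuclideanSpace ℝ (Fin n))) (gradw x)) ((0:ℝ) • v + x) := by simpa using hF
      have := hF'.comp_hasDerivAt 0 (by simpa [add_comm] using hL :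
        HasDerivAt (fun t : ℝ => t • v + x) v 0)
      convert this using 1
      · rfl
      · rfl
      · funext t; simp [Function.comp, add_comm]
      · rfl
    have hslope := hasDerivAt_iff_tendsto_slope.mp hwd
    have h1 : Filter.Tendsto (slope (fun t : ℝ => w (x + t • v)) 0)
        (nhdsWithin 0 (Set.Ioi 0)) (nhds (inner ℝ (gradw x) v : ℝ)) :=
      hslope.mono_left (nhdsWithin_mono _ (fun t ht => ne_of_gt ht))
    have h2 : Filter.Tendsto (fun t : ℝ => α * ((w (x + t • v) - w x) / t))
        (nhdsWithin 0 (Set.Ioi 0)) (nhds (α * (inner ℝ (gradw x) v : ℝ))) := by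
      refine (h1.const_mul α).congr' ?_
      filter_upwards [self_mem_nhdsWithin] with t ht
      simp [slope_def_field]
    refine ge_of_tendsto h2 ?_
    filter_upwards [Ioc_mem_nhdsGT_of_mem (by norm_num : (0:ℝ) ∈ Set.Ico 0 1)] with t ht
    obtain ⟨ht0, ht1⟩ := ht
    have hxt : x + t • v ∈ C := by
      have := hCconv hx.1 hz (by linarith : (0:ℝ) ≤ 1 - t) ht0.le (by ring)
      have he : (1 - t) • x + t • z = x + t • v := by
        rw [hv]; module
      rwa [he] at this
    have hgc : g (x + t • v) ≤ (1 - t) * g x + t * g z := by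
      have := hg.2 (hCG hx.1) (hCG hz) (by linarith : (0:ℝ) ≤ 1 - t) ht0.le (by ring)
      have he : (1 - t) • x + t • z = x + t • v := by
        rw [hv]; module
      rw [he] at this
      simpa using this
    have hmin := hxmin _ hxt
    rw [hD, hD] at hmin
    have hinner : (inner ℝ (gradw y) ((x + t • v) - y) : ℝ)
        = (inner ℝ (gradw y) (x - y) : ℝ) + t * (inner ℝ (gradw y) v : ℝ) := by
      have : (x + t • v) - y = (x - y) + t • v := by abel
      rw [this, inner_add_right, real_inner_smul_right]
    rw [hinner] at hmin
    rw [← mul_div_assoc, le_div_iff₀ ht0]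
    nlinarith [hmin, hgc, hα, ht0]
  rw [hD, hD, hD]
  have e1 : (inner ℝ (gradw y) (z - y) : ℝ)
      = (inner ℝ (gradw y) (x - y) : ℝ) + (inner ℝ (gradw y) v : ℝ) := by
    have : z - y = (x - y) + v := by rw [hv]; abel
    rw [this, inner_add_right]
  have e2 : (inner ℝ (gradw x) (z - x) : ℝ) = (inner ℝ (gradw x) v : ℝ) := by rw [hv]
  rw [e1, e2]
  ring_nf
  ring_nf at key
  nlinarith [key]
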